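/- For all x, y ∈ H one has Σ φ(h₍₁₎·x)·φ(S(h₍₂₎)·y) = n·φ(x·y). (This is the identity (F ⊗ F)(Σ h₍₁₎ ⊗ S(h₍₂₎)) = Σ φ₍₁₎ ⊗ φ₍₂₎ relating the Fourier transform F(x) = δ⁻¹·φ(x·—), with δ² = n, to the comultiplication of φ in the dual Hopf algebra, which is the functional x ⊗ y ↦ φ(x·y).) -/

import Mathlib

open TensorProduct Coalgebra HopfAlgebra

/-- For all `x, y ∈ H` one has `Σ φ(h₍₁₎·x)·φ(S(h₍₂₎)·y) = n·φ(x·y)` (the identity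
`(F ⊗ F)(Σ h₍₁₎ ⊗ S(h₍₂₎)) = Σ φ₍₁₎ ⊗ φ₍₂₎`). -/
theorem fourier_of_c2
    {k : Type*} [Field k] {H : Type*} [Ring H] [HopfAlgebra k H]
    [FiniteDimensional k H]
    (n : k) (hn : n = (Module.finrank k H : k)) (hn0 : n ≠ 0)
    (h : H)
    (hInt : ∀ x : H, x * h = counit (R := k) x • h)
    (hInt' : ∀ x : H, h * x = counit (R := k) x • h)
    (hεh : counit (R := k) h = n)
    (φ : H →ₗ[k] k)
    (hφInt : ∀ x : H, TensorProduct.lid k H (LinearMap.rTensor H φ (comul x)) = φ x • 1)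
    (hφInt' : ∀ x : H, TensorProduct.rid k H (LinearMap.lTensor H φ (comul x)) = φ x • 1)
    (hφ1 : φ 1 = n)
    (hSS : ∀ x : H, antipode (R := k) (antipode (R := k) x) = x)
    (hSh : antipode (R := k) h = h)
    (hφS : ∀ x : H, φ (antipode (R := k) x) = φ x)
    (hφh : φ h = n)
    (hφtr : ∀ x y : H, φ (x * y) = φ (y * x))
    :
    ∀ x y : H,
      TensorProduct.lid k k
        (TensorProduct.map (φ ∘ₗ LinearMap.mulRight k x)
          (φ ∘ₗ LinearMap.mulRight k y ∘ₗ antipode (R := k)) (comul h))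
        = n * φ (x * y) := by
  intro x y
  set S : H →ₗ[k] H := antipode (R := k) with hS
  -- the auxiliary map Q z = (lid ∘ (φ ⊗ id)) (Δh * z)
  set Q : H ⊗[k] H →ₗ[k] H :=
    (TensorProduct.lid k H).toLinearMap ∘ₗ LinearMap.rTensor H φ ∘ₗ
      LinearMap.mulLeft k (comul (R := k) h) with hQdef
  have hQ : ∀ z : H ⊗[k] H,
      Q z = TensorProduct.lid k H (LinearMap.rTensor H φ (comul (R := k) h * z)) := fun z => rfl
  -- Q on comul
  have hQcomul : ∀ c : H, Q (comul (R := k) c) = (counit (R := k) c * n) • (1 : H) := by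
    intro c
    rw [hQ, ← Bialgebra.comul_mul, hφInt (h * c), hInt' c, map_smul]
    simp [hφh, smul_smul]
  -- multiplicativity of Q in the second slot
  have hL : ∀ (z : H ⊗[k] H) (c : H),
      TensorProduct.lid k H (LinearMap.rTensor H φ z) * c =
        TensorProduct.lid k H (LinearMap.rTensor H φ (z * ((1 : H) ⊗ₜ[k] c))) := by
    intro z c
    induction z using TensorProduct.induction_on with
    | zero => simp
    | tmul p q => simp [Algebra.TensorProduct.tmul_mul_tmul, smul_mul_assoc]
    | add a b ha hb => simp only [map_add, add_mul, ha, hb]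
  have hQsm : ∀ (u v c : H), Q (u ⊗ₜ[k] v) * c = Q (u ⊗ₜ[k] (v * c)) := by
    intro u v c
    rw [hQ, hQ, hL, mul_assoc, Algebra.TensorProduct.tmul_mul_tmul, mul_one]
  -- key computation 1
  have key1 : ∀ z : H ⊗[k] H,
      LinearMap.mul' k H (TensorProduct.map Q S (LinearMap.rTensor H (comul (R := k)) z)) =
        n • S (TensorProduct.lid k H (LinearMap.rTensor H (counit (R := k)) z)) := by
    intro z
    induction z using TensorProduct.induction_on with
    | zero => simp
    | tmul u v =>
        simp only [LinearMap.rTensor_tmul, TensorProduct.map_tmul, hQcomul, lid_tmul,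
          smul_tmul', map_smul, LinearMap.mul'_apply, one_mul, smul_smul,
          smul_mul_assoc]
        rw [mul_comm]
    | add a b ha hb => simp only [map_add, smul_add, ha, hb]
  -- key computation 2 (pointwise in the first slot)
  have key2 : ∀ (u : H) (w : H ⊗[k] H),
      LinearMap.mul' k H (TensorProduct.map Q S ((TensorProduct.assoc k H H H).symm (u ⊗ₜ[k] w))) =
        Q (u ⊗ₜ[k] (LinearMap.mul' k H (LinearMap.lTensor H S w))) := by
    intro u w
    induction w using TensorProduct.induction_on with
    | zero =>
        rw [tmul_zero, (TensorProduct.assoc k H H H).symm.map_zero]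
        simp
    | tmul v w' =>
        rw [TensorProduct.assoc_symm_tmul]
        simp only [TensorProduct.map_tmul, LinearMap.mul'_apply, LinearMap.lTensor_tmul]
        exact hQsm u v (S w')
    | add a b ha hb =>
        simp only [tmul_add, map_add, ha, hb]
  have key3 : ∀ z : H ⊗[k] H,
      LinearMap.mul' k H (TensorProduct.map Q S
          ((TensorProduct.assoc k H H H).symm (LinearMap.lTensor H (comul (R := k)) z))) =
        Q (LinearMap.lTensor H ((Algebra.linearMap k H) ∘ₗ counit (R := k)) z) := by
    intro z
    induction z using TensorProduct.induction_on with
    | zero =>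
        rw [map_zero, (TensorProduct.assoc k H H H).symm.map_zero, map_zero, map_zero,
          map_zero, map_zero]
    | tmul u v =>
        rw [LinearMap.lTensor_tmul, key2 u (comul v), LinearMap.lTensor_tmul]
        congr 1
        rw [LinearMap.comp_apply]
        congr 1
        exact mul_antipode_lTensor_comul_apply (R := k) v
    | add a b ha hb => simp only [map_add, ha, hb]
  -- the main identity : Q (x ⊗ 1) = n • S x
  have e1 : LinearMap.lTensor H ((Algebra.linearMap k H) ∘ₗ counit (R := k))
      (comul (R := k) x) = x ⊗ₜ[k] (1 : H) := by
    rw [LinearMap.lTensor_comp, LinearMap.comp_apply, lTensor_counit_comul]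
    simp
  have main : Q (x ⊗ₜ[k] (1 : H)) = n • S x := by
    have c1 := key1 (comul (R := k) x)
    rw [rTensor_counit_comul, ← coassoc_symm_apply (R := k) x,
      key3 (comul (R := k) x), e1] at c1
    simpa using c1
  -- now compute the goal
  have L1 : ∀ z : H ⊗[k] H,
      TensorProduct.lid k k
          (TensorProduct.map (φ ∘ₗ LinearMap.mulRight k x) (φ ∘ₗ LinearMap.mulRight k y ∘ₗ S) z) =
        (φ ∘ₗ LinearMap.mulRight k y ∘ₗ S)
          (TensorProduct.lid k H (LinearMap.rTensor H (φ ∘ₗ LinearMap.mulRight k x) z)) := by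
    intro z
    induction z using TensorProduct.induction_on with
    | zero => simp
    | tmul u v => simp [smul_eq_mul]
    | add a b ha hb => simp only [map_add, ha, hb]
  have L2 : ∀ z : H ⊗[k] H,
      TensorProduct.lid k H (LinearMap.rTensor H (φ ∘ₗ LinearMap.mulRight k x) z) =
        TensorProduct.lid k H (LinearMap.rTensor H φ (z * (x ⊗ₜ[k] (1 : H)))) := by
    intro z
    induction z using TensorProduct.induction_on with
    | zero => simp
    | tmul u v => simp [Algebra.TensorProduct.tmul_mul_tmul]
    | add a b ha hb => simp only [map_add, add_mul, ha, hb]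
  rw [L1 (comul h), L2 (comul h), ← hQ, main]
  simp only [map_smul, LinearMap.comp_apply, LinearMap.mulRight_apply, hS, hSS x]
  rw [smul_eq_mul]
  rw [← hS, hSS x]
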